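/- Let T be the tournament obtained from a doubly regular tournament on 4k+3 vertices by deleting one vertex, and let V_e, V_o be the sets of vertices of out-degree 2k and 2k+1 respectively. Then for distinct x, y: if x,y ∈ V_e or x,y ∈ V_o then Δ(x,y) = 2k+1, and if x ∈ V_e, y ∈ V_o then Δ(x,y) = 2k. -/

import Mathlib

open Finset

/-- A tournament on vertex set `V`: an orientation of the complete graph.
`r x y` means `x` dominates `y` (the arc `(x,y)` is present). -/
structure Tournament (V : Type*) where
  r : V → V → Bool
  irrefl : ∀ x, r x x = false
  total : ∀ x y, x ≠ y → r x y = !r y x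

variable {V : Type*}

/-- Out-neighborhood `v(x)`. -/
def Tournament.outSet [Fintype V] (T : Tournament V) (x : V) : Finset V :=
  univ.filter fun y => T.r x y = true

/-- In-neighborhood `f(x)`. -/
def Tournament.inSet [Fintype V] (T : Tournament V) (x : V) : Finset V :=
  univ.filter fun y => T.r y x = true

/-- Out-degree `d⁺(x)`. -/
def Tournament.outDeg [Fintype V] (T : Tournament V) (x : V) : ℕ :=
  (T.outSet x).card

/-- In-degree `d⁻(x)`. -/
def Tournament.inDeg [Fintype V] (T : Tournament V) (x : V) : ℕ :=
  (T.inSet x).card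

/-- Number of separators `Δ(x,y) = |v(x)∩f(y)| + |f(x)∩v(y)|`. -/
def Tournament.sep [Fintype V] [DecidableEq V] (T : Tournament V) (x y : V) : ℕ :=
  (T.outSet x ∩ T.inSet y).card + (T.inSet x ∩ T.outSet y).card

/-- `I` is a module of `T` if every vertex outside `I` relates uniformly to `I`. -/
def Tournament.IsModule [Fintype V] (T : Tournament V) (I : Finset V) : Prop :=
  ∀ x ∉ I, (∀ y ∈ I, T.r x y = true) ∨ (∀ y ∈ I, T.r y x = true)

/-- A tournament is simple if all its modules are trivial. -/
def Tournament.IsSimple [Fintype V] (T : Tournament V) : Prop :=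
  ∀ I : Finset V, T.IsModule I → I.card ≤ 1 ∨ I = univ

/-- The number of arcs of `T` that are reversed in `T'`. -/
def Tournament.dist [Fintype V] (T T' : Tournament V) : ℕ :=
  (univ.filter fun p : V × V => T.r p.1 p.2 = true ∧ T'.r p.1 p.2 = false).card

/-- Arrow-simplicity: the least number of arcs whose reversal yields a
non-simple tournament. -/
noncomputable def Tournament.simplicity [Fintype V] (T : Tournament V) : ℕ :=
  sInf {m : ℕ | ∃ T' : Tournament V, ¬ T'.IsSimple ∧ T.dist T' = m}

/-- Subtournament induced on a finset of vertices. -/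
def Tournament.sub (T : Tournament V) (s : Finset V) : Tournament {x // x ∈ s} where
  r a b := T.r a b
  irrefl a := T.irrefl a
  total a b h := T.total a b fun e => h (Subtype.ext e)

/-- The relation obtained from `T` by reversing the orientation between `x` and `y`
whenever `g x y` holds. -/
def Tournament.flipRel (T : Tournament V) (g : V → V → Bool) (x y : V) : Bool :=
  if g x y = true then !T.r x y else T.r x y

section Aux
variable {V : Type*} [Fintype V] [DecidableEq V]

lemma card_filter_univ_subtype (S : Finset V) (p : V → Prop) [DecidablePred p] :
    ((univ : Finset {x // x ∈ S}).filter (fun z => p z.val)).card = (S.filter p).card := by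
  rw [Finset.univ_eq_attach, Finset.filter_attach, Finset.card_map, Finset.card_attach]

lemma Tournament.r_false_of_ne (T : Tournament V) {x y : V} (h : x ≠ y) (h2 : T.r x y = true) :
    T.r y x = false := by
  have := T.total x y h
  rw [h2] at this
  simpa using this.symm

lemma Tournament.r_true_of_ne (T : Tournament V) {x y : V} (h : x ≠ y) (h2 : T.r x y = false) :
    T.r y x = true := by
  have := T.total x y h
  rw [h2] at this
  simpa using this.symm

lemma Tournament.outDeg_eq (k : ℕ) (T : Tournament V)
    (hcard : Fintype.card V = 4 * k + 3)
    (hdr : ∀ x y : V, x ≠ y → (T.outSet x ∩ T.outSet y).card = k) (x : V) :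
    T.outDeg x = 2 * k + 1 := by
  classical
  set s := T.outSet x with hs
  have hxs : x ∉ s := by simp [hs, Tournament.outSet, T.irrefl]
  set d := s.card with hd
  -- A = number of ordered pairs (z,u) in s×s with r z u
  have key : ∀ z ∈ s, (s.filter fun u => T.r z u = true).card = k := by
    intro z hz
    have hzx : z ≠ x := fun h => hxs (h ▸ hz)
    have := hdr x z hzx.symm
    rw [← this, hs]
    congr 1
    ext u
    simp [Tournament.outSet, Finset.mem_filter, and_comm]
  have hA : (∑ z ∈ s, (s.filter fun u => T.r z u = true).card) = d * k := by
    rw [Finset.sum_congr rfl key]; simp [mul_comm]; exact Or.inl hd.symm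
  have hAB : ∀ z ∈ s, (s.filter fun u => T.r z u = true).card
      = (s.filter fun u => T.r u z = true).card → True := fun _ _ _ => trivial
  -- A = B by symmetry of double sum
  have hsym : (∑ z ∈ s, (s.filter fun u => T.r z u = true).card)
      = (∑ z ∈ s, (s.filter fun u => T.r u z = true).card) := by
    simp only [Finset.card_filter]
    rw [Finset.sum_comm]
  -- A + B = d*(d-1)
  have hsum : (∑ z ∈ s, (s.filter fun u => T.r z u = true).card)
      + (∑ z ∈ s, (s.filter fun u => T.r u z = true).card) = d * (d - 1) := by
    simp only [Finset.card_filter]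
    rw [← Finset.sum_add_distrib]
    have : ∀ z ∈ s, ((∑ u ∈ s, if T.r z u = true then 1 else 0)
        + ∑ u ∈ s, if T.r u z = true then 1 else 0) = d - 1 := by
      intro z hz
      rw [← Finset.sum_add_distrib]
      have : ∀ u ∈ s, ((if T.r z u = true then 1 else 0)
          + if T.r u z = true then 1 else 0 : ℕ) = if z = u then 0 else 1 := by
        intro u hu
        by_cases h : z = u
        · simp [h, T.irrefl]
        · have := T.total z u h
          rcases Bool.eq_false_or_eq_true (T.r z u) with h1 | h1 <;>
            rw [h1] at this ⊢ <;> simp_all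
      rw [Finset.sum_congr rfl this]
      have h1 : (∑ u ∈ s, if z = u then 0 else 1) + (∑ u ∈ s, if z = u then 1 else 0) = d := by
        rw [← Finset.sum_add_distrib]
        have hsplit : ∀ u ∈ s, ((if z = u then 0 else 1) + (if z = u then 1 else 0) : ℕ) = 1 := by
          intro u _; split <;> rfl
        rw [Finset.sum_congr rfl hsplit, Finset.sum_const, smul_eq_mul, mul_one]
      have h2 : (∑ u ∈ s, if z = u then 1 else 0) = 1 := by
        rw [Finset.sum_ite_eq]; simp [hz]
      omega
    rw [Finset.sum_congr rfl this]
    simp [mul_comm]; exact Or.inl hd.symm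
  rw [← hsym, hA] at hsum
  -- 2*(d*k) = d*(d-1)
  have h2 : d * (2 * k) = d * (d - 1) := by
    rw [show d * (2 * k) = d * k + d * k by ring]; exact hsum
  rcases Nat.eq_zero_or_pos d with h | hpos
  · -- degenerate: s empty, derive contradiction
    exfalso
    have hse : s = ∅ := Finset.card_eq_zero.mp h
    -- k = 0
    obtain ⟨y, z, hy, hz, hyz⟩ : ∃ y z : V, y ≠ x ∧ z ≠ x ∧ y ≠ z := by
      have h3 : 1 < (univ.erase x).card := by
        rw [Finset.card_erase_of_mem (Finset.mem_univ x), Finset.card_univ, hcard]; omega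
      obtain ⟨y, hy, z, hz, hyz⟩ := Finset.one_lt_card.mp h3
      exact ⟨y, z, (Finset.mem_erase.mp hy).1, (Finset.mem_erase.mp hz).1, hyz⟩
    have hk0 : k = 0 := by
      have := hdr x y (Ne.symm hy)
      rw [← hs, hse] at this
      simpa using this.symm
    have hxy : T.r y x = true := by
      apply T.r_true_of_ne (Ne.symm hy)
      rcases Bool.eq_false_or_eq_true (T.r x y) with h1 | h1
      · exact absurd (show y ∈ s by simp [hs, Tournament.outSet, h1]) (by simp [hse])
      · exact h1
    have hxz : T.r z x = true := by
      apply T.r_true_of_ne (Ne.symm hz)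
      rcases Bool.eq_false_or_eq_true (T.r x z) with h1 | h1
      · exact absurd (show z ∈ s by simp [hs, Tournament.outSet, h1]) (by simp [hse])
      · exact h1
    have hmem : x ∈ T.outSet y ∩ T.outSet z := by
      simp [Tournament.outSet, hxy, hxz]
    have hcard2 := hdr y z hyz
    rw [hk0, Finset.card_eq_zero] at hcard2
    rw [hcard2] at hmem
    simp at hmem
  · -- d = 2k+1
    have h : 2 * k = d - 1 := Nat.eq_of_mul_eq_mul_left hpos h2
    have hdeg : T.outDeg x = d := rfl
    omega

lemma Tournament.card_out_in (k : ℕ) (T : Tournament V)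
    (hcard : Fintype.card V = 4 * k + 3)
    (hdr : ∀ x y : V, x ≠ y → (T.outSet x ∩ T.outSet y).card = k)
    {x y : V} (hxy : x ≠ y) :
    (T.outSet x ∩ T.inSet y).card = if T.r x y = true then k else k + 1 := by
  have hdeg := T.outDeg_eq k hcard hdr x
  have hpart : (T.outSet x ∩ T.outSet y) ∪ (T.outSet x ∩ T.inSet y) ∪ (T.outSet x ∩ {y})
      = T.outSet x := by
    ext z
    simp only [Finset.mem_union, Finset.mem_inter, Finset.mem_singleton, Tournament.outSet,
      Tournament.inSet, Finset.mem_filter, Finset.mem_univ, true_and]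
    constructor
    · rintro ((⟨h, _⟩ | ⟨h, _⟩) | ⟨h, _⟩) <;> exact h
    · intro h
      by_cases hzy : z = y
      · exact Or.inr ⟨h, hzy⟩
      · rcases Bool.eq_false_or_eq_true (T.r y z) with h1 | h1
        · exact Or.inl (Or.inl ⟨h, h1⟩)
        · exact Or.inl (Or.inr ⟨h, T.r_true_of_ne (Ne.symm hzy) h1⟩)
  have hd1 : Disjoint (T.outSet x ∩ T.outSet y) (T.outSet x ∩ T.inSet y) := by
    rw [Finset.disjoint_left]
    intro z hz1 hz2
    simp only [Tournament.outSet, Tournament.inSet, Finset.mem_inter, Finset.mem_filter,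
      Finset.mem_univ, true_and] at hz1 hz2
    have hzy : z ≠ y := fun h => by rw [h, T.irrefl] at hz2; simp at hz2
    have := T.r_false_of_ne (Ne.symm hzy) hz1.2
    rw [hz2.2] at this; simp at this
  have hd2 : Disjoint ((T.outSet x ∩ T.outSet y) ∪ (T.outSet x ∩ T.inSet y))
      (T.outSet x ∩ {y}) := by
    rw [Finset.disjoint_left]
    intro z hz1 hz2
    simp only [Tournament.outSet, Tournament.inSet, Finset.mem_union, Finset.mem_inter,
      Finset.mem_filter, Finset.mem_singleton, Finset.mem_univ, true_and] at hz1 hz2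
    rcases hz1 with ⟨_, h⟩ | ⟨_, h⟩ <;> rw [hz2.2, T.irrefl] at h <;> simp at h
  have hcards := congrArg Finset.card hpart
  rw [Finset.card_union_of_disjoint hd2, Finset.card_union_of_disjoint hd1, hdr x y hxy] at hcards
  have hsing : (T.outSet x ∩ {y}).card = if T.r x y = true then 1 else 0 := by
    by_cases h : T.r x y = true
    · rw [Finset.inter_singleton_of_mem (by simp [Tournament.outSet, h])]; simp [h]
    · rw [Finset.inter_singleton_of_notMem (by simp [Tournament.outSet, h])]; simp [h]
  rw [hsing] at hcards
  have hdeg' : (T.outSet x).card = 2 * k + 1 := hdeg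
  rw [hdeg'] at hcards
  by_cases h : T.r x y = true <;> simp [h] at hcards ⊢ <;> omega

lemma Tournament.sub_outDeg (k : ℕ) (T : Tournament V)
    (hcard : Fintype.card V = 4 * k + 3)
    (hdr : ∀ x y : V, x ≠ y → (T.outSet x ∩ T.outSet y).card = k)
    (w : V) (z : {v // v ∈ (univ : Finset V).erase w}) :
    (T.sub ((univ : Finset V).erase w)).outDeg z
      = if T.r z.val w = true then 2 * k else 2 * k + 1 := by
  have hdeg : (T.outSet z.val).card = 2 * k + 1 := T.outDeg_eq k hcard hdr z.val
  have h1 : (T.sub ((univ : Finset V).erase w)).outDeg z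
      = (((univ : Finset V).erase w).filter fun u => T.r z.val u = true).card := by
    exact card_filter_univ_subtype ((univ : Finset V).erase w) (fun u => T.r z.val u = true)
  rw [h1]
  have h2 : ((univ : Finset V).erase w).filter (fun u => T.r z.val u = true)
      = (T.outSet z.val).erase w := by
    ext u
    simp [Tournament.outSet, Finset.mem_erase, and_comm]
  rw [h2]
  by_cases hw : T.r z.val w = true
  · rw [Finset.card_erase_of_mem (by simp [Tournament.outSet, hw]), hdeg, if_pos hw]
    omega
  · rw [Finset.erase_eq_of_notMem (by simp [Tournament.outSet, hw]), hdeg, if_neg hw]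

lemma Tournament.sub_sep (T : Tournament V) (w : V)
    (x y : {v // v ∈ (univ : Finset V).erase w}) :
    (T.sub ((univ : Finset V).erase w)).sep x y
      = ((T.outSet x.val ∩ T.inSet y.val).erase w).card
        + ((T.inSet x.val ∩ T.outSet y.val).erase w).card := by
  rw [Tournament.sep]
  congr 1
  · have h1 : (T.sub ((univ : Finset V).erase w)).outSet x ∩ (T.sub ((univ : Finset V).erase w)).inSet y
        = univ.filter (fun z : {v // v ∈ (univ : Finset V).erase w} =>
            (T.r x.val z.val = true ∧ T.r z.val y.val = true)) := by
      ext z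
      rw [Finset.mem_inter]; simp only [Tournament.outSet, Tournament.inSet, Finset.mem_filter, Finset.mem_univ, true_and]; rfl
    rw [h1, card_filter_univ_subtype _ (fun z => T.r x.val z = true ∧ T.r z y.val = true)]
    congr 1
    ext z
    simp [Tournament.outSet, Tournament.inSet, Finset.mem_erase]
  · have h1 : (T.sub ((univ : Finset V).erase w)).inSet x ∩ (T.sub ((univ : Finset V).erase w)).outSet y
        = univ.filter (fun z : {v // v ∈ (univ : Finset V).erase w} =>
            (T.r z.val x.val = true ∧ T.r y.val z.val = true)) := by
      ext z
      rw [Finset.mem_inter]; simp only [Tournament.outSet, Tournament.inSet, Finset.mem_filter, Finset.mem_univ, true_and]; rfl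
    rw [h1, card_filter_univ_subtype _ (fun z => T.r z x.val = true ∧ T.r y.val z = true)]
    congr 1
    ext z
    simp [Tournament.outSet, Tournament.inSet, Finset.mem_erase]

end Aux
/-- In the tournament obtained from a doubly regular tournament on `4k+3` vertices by
deleting one vertex, with `V_e`, `V_o` the vertices of out-degree `2k`, `2k+1`:
pairs within `V_e` or within `V_o` have `Δ(x,y) = 2k+1`, and mixed pairs have
`Δ(x,y) = 2k`. -/
theorem stmt_11 {V : Type*} [Fintype V] [DecidableEq V] (k : ℕ) (T : Tournament V)
    (hcard : Fintype.card V = 4 * k + 3)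
    (hdr : ∀ x y : V, x ≠ y → (T.outSet x ∩ T.outSet y).card = k)
    (w : V) :
    ∀ x y : {v // v ∈ univ.erase w}, x ≠ y →
      (((T.sub (univ.erase w)).outDeg x = 2 * k ∧
          (T.sub (univ.erase w)).outDeg y = 2 * k) ∨
        ((T.sub (univ.erase w)).outDeg x = 2 * k + 1 ∧
          (T.sub (univ.erase w)).outDeg y = 2 * k + 1) →
        (T.sub (univ.erase w)).sep x y = 2 * k + 1) ∧
      ((T.sub (univ.erase w)).outDeg x = 2 * k ∧
          (T.sub (univ.erase w)).outDeg y = 2 * k + 1 →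
        (T.sub (univ.erase w)).sep x y = 2 * k) := by
  intro x y hxy
  have hxw : (x : V) ≠ w := (Finset.mem_erase.mp x.2).1
  have hyw : (y : V) ≠ w := (Finset.mem_erase.mp y.2).1
  have hxyv : (x : V) ≠ (y : V) := fun h => hxy (Subtype.ext h)
  have hdx := T.sub_outDeg k hcard hdr w x
  have hdy := T.sub_outDeg k hcard hdr w y
  have hsep := T.sub_sep w x y
  have cA : (T.outSet x.val ∩ T.inSet y.val).card
      = if T.r x.val y.val = true then k else k + 1 := T.card_out_in k hcard hdr hxyv
  have cB : (T.inSet x.val ∩ T.outSet y.val).card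
      = if T.r y.val x.val = true then k else k + 1 := by
    rw [Finset.inter_comm]; exact T.card_out_in k hcard hdr (Ne.symm hxyv)
  have wA : w ∈ T.outSet x.val ∩ T.inSet y.val ↔ (T.r x.val w = true ∧ T.r w y.val = true) := by
    simp [Tournament.outSet, Tournament.inSet]
  have wB : w ∈ T.inSet x.val ∩ T.outSet y.val ↔ (T.r w x.val = true ∧ T.r y.val w = true) := by
    simp [Tournament.outSet, Tournament.inSet, and_comm]
  have cardA : ∀ s : Finset V, (s.erase w).card = s.card - (if w ∈ s then 1 else 0) := by
    intro s
    by_cases h : w ∈ s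
    · rw [Finset.card_erase_of_mem h, if_pos h]
    · rw [Finset.erase_eq_of_notMem h, if_neg h]; omega
  rw [cardA _, cardA _, cA, cB] at hsep
  constructor
  · rintro (⟨hx, hy⟩ | ⟨hx, hy⟩)
    · rw [hdx] at hx
      rw [hdy] at hy
      have bx : T.r x.val w = true := by by_contra hb; rw [if_neg hb] at hx; omega
      have by' : T.r y.val w = true := by by_contra hb; rw [if_neg hb] at hy; omega
      have hwy : T.r w y.val = false := T.r_false_of_ne hyw by'
      have hwx : T.r w x.val = false := T.r_false_of_ne hxw bx
      have hnA : w ∉ T.outSet x.val ∩ T.inSet y.val := by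
        rw [wA]; rintro ⟨_, h⟩; rw [hwy] at h; simp at h
      have hnB : w ∉ T.inSet x.val ∩ T.outSet y.val := by
        rw [wB]; rintro ⟨h, _⟩; rw [hwx] at h; simp at h
      rw [if_neg hnA, if_neg hnB] at hsep
      rw [hsep]
      rcases Bool.eq_false_or_eq_true (T.r x.val y.val) with h1 | h1
      · have h2 := T.r_false_of_ne hxyv h1
        rw [h1, h2]; simp; omega
      · have h2 := T.r_true_of_ne hxyv h1
        rw [h1, h2]; simp; omega
    · rw [hdx] at hx
      rw [hdy] at hy
      have bx : T.r x.val w = false := by by_contra hb; rw [Bool.not_eq_false] at hb; rw [if_pos hb] at hx; omega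
      have by' : T.r y.val w = false := by by_contra hb; rw [Bool.not_eq_false] at hb; rw [if_pos hb] at hy; omega
      have hnA : w ∉ T.outSet x.val ∩ T.inSet y.val := by
        rw [wA]; rintro ⟨h, _⟩; rw [bx] at h; simp at h
      have hnB : w ∉ T.inSet x.val ∩ T.outSet y.val := by
        rw [wB]; rintro ⟨_, h⟩; rw [by'] at h; simp at h
      rw [if_neg hnA, if_neg hnB] at hsep
      rw [hsep]
      rcases Bool.eq_false_or_eq_true (T.r x.val y.val) with h1 | h1
      · have h2 := T.r_false_of_ne hxyv h1
        rw [h1, h2]; simp; omega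
      · have h2 := T.r_true_of_ne hxyv h1
        rw [h1, h2]; simp; omega
  · rintro ⟨hx, hy⟩
    rw [hdx] at hx
    rw [hdy] at hy
    have bx : T.r x.val w = true := by by_contra hb; rw [if_neg hb] at hx; omega
    have by' : T.r y.val w = false := by by_contra hb; rw [Bool.not_eq_false] at hb; rw [if_pos hb] at hy; omega
    have hwy : T.r w y.val = true := T.r_true_of_ne hyw by'
    have hwx : T.r w x.val = false := T.r_false_of_ne hxw bx
    have hA : w ∈ T.outSet x.val ∩ T.inSet y.val := wA.mpr ⟨bx, hwy⟩
    have hnB : w ∉ T.inSet x.val ∩ T.outSet y.val := by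
      rw [wB]; rintro ⟨h, _⟩; rw [hwx] at h; simp at h
    have hApos : 1 ≤ (if T.r x.val y.val = true then k else k + 1) := by
      rw [← cA]; exact Finset.card_pos.mpr ⟨w, hA⟩
    rw [if_pos hA, if_neg hnB] at hsep
    rw [hsep]
    rcases Bool.eq_false_or_eq_true (T.r x.val y.val) with h1 | h1
    · have h2 := T.r_false_of_ne hxyv h1
      rw [h1] at hApos
      rw [h1, h2]
      simp at hApos ⊢
      omega
    · have h2 := T.r_true_of_ne hxyv h1
      rw [h1] at hApos
      rw [h1, h2]
      simp at hApos ⊢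
      omega
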